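/- Let B be the minimal monomial generating set of In(I), E_i = { v ∈ ℕ^{n-i} : x^v ∈ B and x^v involves none of x_{n-i+1},...,x_n }, and p_j : ℕ^{n-i} → ℕ^{n-i-1} the deletion of the j-th coordinate. Then c_i(I) < ∞ if and only if for every a ∈ p_{n-i}(E_i) \ E_{i+1} there exist b_1,...,b_{n-i-1} ∈ E_{i+1} with p_j(a) ≥ p_j(b_j) componentwise for each j = 1,...,n-i-1. -/

import Mathlib

open MvPolynomial

noncomputable section

/-- Coercion of a natural number into `WithBot ℕ∞` (degrees, with `⊥ = -∞`, `⊤ = ∞`). -/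
def natW (r : ℕ) : WithBot ℕ∞ := ((r : ℕ∞) : WithBot ℕ∞)

/-- The total degree `|a|` of an exponent vector. -/
def degOf {n : ℕ} (a : Fin n →₀ ℕ) : ℕ := a.sum fun _ e => e

variable {k : Type*} [Field k] {n : ℕ}

/-- The top degree in which the graded pieces of two ideals differ
(`⊥` if they never differ, `⊤` if they differ in unboundedly many degrees). -/
def topDiff (I J : Ideal (MvPolynomial (Fin n) k)) : WithBot ℕ∞ :=
  sSup {x | ∃ r : ℕ, x = natW r ∧
    ¬ ∀ f : MvPolynomial (Fin n) k, f.IsHomogeneous r → (f ∈ I ↔ f ∈ J)}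

/-- `I` is a homogeneous (graded) ideal. -/
def HomogIdeal (I : Ideal (MvPolynomial (Fin n) k)) : Prop :=
  ∀ f ∈ I, ∀ r : ℕ, homogeneousComponent r f ∈ I

/-- The maximal homogeneous ideal `𝔪 = (x₁, …, xₙ)`. -/
def maxIdl (k : Type*) [Field k] (n : ℕ) : Ideal (MvPolynomial (Fin n) k) :=
  Ideal.span (Set.range X)

/-- The ideal `(I, z₁, …, z_i)`. -/
def partIdeal (I : Ideal (MvPolynomial (Fin n) k)) {m : ℕ}
    (z : Fin m → MvPolynomial (Fin n) k) (i : ℕ) : Ideal (MvPolynomial (Fin n) k) :=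
  I ⊔ Ideal.span (z '' {j : Fin m | (j : ℕ) < i})

/-- `a_z^i(S/I) = sup { r : [(I,z₁,…,z_i) : z_{i+1}]_r ≠ (I,z₁,…,z_i)_r }`. -/
def aInv (I : Ideal (MvPolynomial (Fin n) k)) {m : ℕ}
    (z : Fin m → MvPolynomial (Fin n) k) (i : Fin m) : WithBot ℕ∞ :=
  topDiff ((partIdeal I z (i : ℕ)).colon (Ideal.span {z i})) (partIdeal I z (i : ℕ))

/-- `z` is a filter-regular sequence for `S/I`: each `z_{i+1}` avoids every associated
prime of `(I,z₁,…,z_i)` other than the maximal homogeneous ideal. -/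
def FilterRegular (I : Ideal (MvPolynomial (Fin n) k)) {m : ℕ}
    (z : Fin m → MvPolynomial (Fin n) k) : Prop :=
  ∀ i : Fin m, ∀ p : Ideal (MvPolynomial (Fin n) k),
    IsAssociatedPrime p (MvPolynomial (Fin n) k ⧸ partIdeal I z (i : ℕ)) →
    p ≠ maxIdl k n → z i ∉ p

/-- The saturation `⋃_{m ≥ 1} (J : z^m)`. -/
def satIdeal (J : Ideal (MvPolynomial (Fin n) k)) (z : MvPolynomial (Fin n) k) :
    Ideal (MvPolynomial (Fin n) k) :=
  ⨆ m : ℕ, J.colon (Ideal.span {z ^ (m + 1)})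

/-- `a <_drevlex b` for the degree reverse lexicographic order with `x₁ > x₂ > … > xₙ`. -/
def RevLexLT {n : ℕ} (a b : Fin n →₀ ℕ) : Prop :=
  degOf a < degOf b ∨
    (degOf a = degOf b ∧ ∃ j : Fin n, b j < a j ∧ ∀ l : Fin n, j < l → a l = b l)

/-- The initial ideal of `I` with respect to the reverse lexicographic order:
the ideal generated by the leading monomials of the nonzero elements of `I`. -/
def initialIdeal (I : Ideal (MvPolynomial (Fin n) k)) : Ideal (MvPolynomial (Fin n) k) :=
  Ideal.span {g | ∃ f ∈ I, f ≠ 0 ∧ ∃ μ ∈ f.support,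
    (∀ ν ∈ f.support, ν = μ ∨ RevLexLT ν μ) ∧ g = monomial μ (1 : k)}

/-- The evaluation `x_{n-i+1} = ⋯ = x_n = 0`. -/
def evalZero (k : Type*) [Field k] (n i : ℕ) :
    MvPolynomial (Fin n) k →ₐ[k] MvPolynomial (Fin n) k :=
  aeval fun j : Fin n => if (j : ℕ) < n - i then X j else 0

/-- The evaluation `x_{n-i+1} = ⋯ = x_n = 0`, `x_{n-i} = 1`. -/
def evalOne (k : Type*) [Field k] (n i : ℕ) :
    MvPolynomial (Fin n) k →ₐ[k] MvPolynomial (Fin n) k :=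
  aeval fun j : Fin n =>
    if (j : ℕ) < n - i - 1 then X j else if (j : ℕ) = n - i - 1 then 1 else 0

/-- `J_i`: the ideal obtained from `In(I)` by evaluating `x_{n-i+1} = ⋯ = x_n = 0`. -/
def Jlow (i : ℕ) (I : Ideal (MvPolynomial (Fin n) k)) : Ideal (MvPolynomial (Fin n) k) :=
  Ideal.map (evalZero k n i) (initialIdeal I)

/-- `J̃_i`: the ideal obtained from `J_i` by the further evaluation `x_{n-i} = 1`. -/
def Jtil (i : ℕ) (I : Ideal (MvPolynomial (Fin n) k)) : Ideal (MvPolynomial (Fin n) k) :=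
  Ideal.map (evalOne k n i) (initialIdeal I)

/-- `c_i(I) = sup { r : (J̃_i/J_i)_r ≠ 0 }`, computed in `S_i = k[x₁,…,x_{n-i}]`. -/
def cInv (i : ℕ) (I : Ideal (MvPolynomial (Fin n) k)) : WithBot ℕ∞ :=
  sSup {x | ∃ r : ℕ, x = natW r ∧ ∃ f : MvPolynomial (Fin n) k,
    f ∈ Jtil i I ∧ f ∈ supported k {j : Fin n | (j : ℕ) < n - i} ∧
    f.IsHomogeneous r ∧ f ∉ Jlow i I}

/-- `r(I) = sup { r : (S_d/J_d)_r ≠ 0 }`. -/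
def rInv (d : ℕ) (I : Ideal (MvPolynomial (Fin n) k)) : WithBot ℕ∞ :=
  sSup {x | ∃ r : ℕ, x = natW r ∧ ∃ f : MvPolynomial (Fin n) k,
    f ∈ supported k {j : Fin n | (j : ℕ) < n - d} ∧ f.IsHomogeneous r ∧ f ∉ Jlow d I}

/-- The partial regularity `reg_t(S/I)`, via its characterization
`reg_t(S/I) = max_i a_z^i(S/I)` for any filter-regular sequence `z` of `t+1` linear forms
([T1, Proposition 2.2]; equal to `max { aᵢ(S/I) + i : i ≤ t }` in terms of local cohomology). -/
def regT (t : ℕ) (I : Ideal (MvPolynomial (Fin n) k)) : WithBot ℕ∞ :=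
  sSup {x | ∃ z : Fin (t + 1) → MvPolynomial (Fin n) k,
    (∀ j, (z j).IsHomogeneous 1) ∧ FilterRegular I z ∧
    x = ⨆ i : Fin (t + 1), aInv I z i}

/-- The Castelnuovo–Mumford regularity `reg(S/I)`, via its characterization
`reg(S/I) = max { a_z^0, …, a_z^{d-1}, r_z(S/I) }` for any filter-regular sequence `z`
of `d = dim S/I` linear forms ([BS, Theorem 1.10], [T1, Corollary 3.3]). -/
def regCM (I : Ideal (MvPolynomial (Fin n) k)) : WithBot ℕ∞ :=
  sSup {x | ∃ d : ℕ, ringKrullDim (MvPolynomial (Fin n) k ⧸ I) = natW d ∧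
    ∃ z : Fin d → MvPolynomial (Fin n) k,
      (∀ j, (z j).IsHomogeneous 1) ∧ FilterRegular I z ∧
      x = (⨆ i : Fin d, aInv I z i) ⊔ topDiff ⊤ (I ⊔ Ideal.span (Set.range z))}

/-- The exponent vectors of the minimal monomial generators of a monomial ideal. -/
def minGens (I : Ideal (MvPolynomial (Fin n) k)) : Set (Fin n →₀ ℕ) :=
  {μ | monomial μ (1 : k) ∈ I ∧
    ∀ ν : Fin n →₀ ℕ, monomial ν (1 : k) ∈ I → ν ≤ μ → ν = μ}

/-- `E_i`: the exponent vectors of the minimal generators of `In(I)` involving none of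
the variables `x_{n-i+1}, …, x_n`. -/
def Evar (i : ℕ) (I : Ideal (MvPolynomial (Fin n) k)) : Set (Fin n →₀ ℕ) :=
  {μ ∈ minGens (initialIdeal I) | ∀ j : Fin n, n - i ≤ (j : ℕ) → μ j = 0}

/-- The set `F` of corners of the staircase determined by `E`:
vectors `a = max(v₁,…,v_s) - (1,…,1)` where `v j ∈ E`, the `j`-th coordinate of `v j`
strictly exceeds that of `v h` for `h ≠ j`, and `a ≱ w` for all `w ∈ E`. -/
def corners {s : ℕ} (E : Set (Fin s →₀ ℕ)) : Set (Fin s →₀ ℕ) :=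
  {a | (∃ v : Fin s → (Fin s →₀ ℕ), (∀ j, v j ∈ E) ∧
      (∀ j h : Fin s, h ≠ j → v h j < v j j) ∧
      ∀ l : Fin s, a l + 1 = Finset.univ.sup fun j => v j l) ∧
    ∀ w ∈ E, ¬ w ≤ a}

/-! ### Auxiliary lemmas for Statement 9 -/

section Stmt9Aux

lemma natW_le_natW {r N : ℕ} (h : r ≤ N) : natW r ≤ natW N := by
  simp only [natW, WithBot.coe_le_coe, Nat.cast_le]; exact h

lemma natW_lt_top (N : ℕ) : natW N < ⊤ := WithBot.coe_lt_coe.mpr (ENat.coe_lt_top N)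

lemma sSup_natW_lt_top_iff (P : ℕ → Prop) :
    sSup {x : WithBot ℕ∞ | ∃ r : ℕ, x = natW r ∧ P r} < ⊤ ↔ ∃ N : ℕ, ∀ r, P r → r ≤ N := by
  constructor
  · intro h
    by_contra hb
    push_neg at hb
    have htop : sSup {x : WithBot ℕ∞ | ∃ r : ℕ, x = natW r ∧ P r} = ⊤ := by
      have hall : ∀ m : ℕ, natW m ≤ sSup {x : WithBot ℕ∞ | ∃ r : ℕ, x = natW r ∧ P r} := by
        intro m
        obtain ⟨r, hPr, hmr⟩ := hb m
        exact le_trans (natW_le_natW hmr.le) (le_sSup ⟨r, rfl, hPr⟩)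
      cases hx : sSup {x : WithBot ℕ∞ | ∃ r : ℕ, x = natW r ∧ P r} with
      | bot => exact absurd (hx ▸ hall 0) (by simp [natW])
      | coe c =>
        cases c with
        | top => rfl
        | coe m =>
          have := hx ▸ hall (m + 1)
          simp only [natW, WithBot.coe_le_coe, Nat.cast_le] at this
          omega
    rw [htop] at h
    exact lt_irrefl _ h
  · rintro ⟨N, hN⟩
    refine lt_of_le_of_lt (sSup_le ?_) (natW_lt_top N)
    rintro x ⟨r, rfl, hr⟩
    exact natW_le_natW (hN r hr)

variable {k : Type*} [Field k] {n : ℕ}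

/-- The set of exponent vectors generating the initial ideal. -/
def Gset (I : Ideal (MvPolynomial (Fin n) k)) : Set (Fin n →₀ ℕ) :=
  {μ | ∃ f ∈ I, f ≠ 0 ∧ μ ∈ f.support ∧ ∀ ν ∈ f.support, ν = μ ∨ RevLexLT ν μ}

lemma initialIdeal_eq (I : Ideal (MvPolynomial (Fin n) k)) :
    initialIdeal I = Ideal.span ((fun s => monomial s (1 : k)) '' Gset I) := by
  unfold initialIdeal
  congr 1
  ext g
  constructor
  · rintro ⟨f, hf, hf0, μ, hμ, hlead, rfl⟩
    exact ⟨μ, ⟨f, hf, hf0, hμ, hlead⟩, rfl⟩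
  · rintro ⟨μ, ⟨f, hf, hf0, hμ, hlead⟩, rfl⟩
    exact ⟨f, hf, hf0, μ, hμ, hlead, rfl⟩

lemma mem_initialIdeal {I : Ideal (MvPolynomial (Fin n) k)} {f : MvPolynomial (Fin n) k} :
    f ∈ initialIdeal I ↔ ∀ ν ∈ f.support, ∃ γ ∈ Gset I, γ ≤ ν := by
  rw [initialIdeal_eq]
  exact mem_ideal_span_monomial_image

lemma mon_mem_initialIdeal {I : Ideal (MvPolynomial (Fin n) k)} {μ : Fin n →₀ ℕ} :
    monomial μ (1 : k) ∈ initialIdeal I ↔ ∃ γ ∈ Gset I, γ ≤ μ := by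
  rw [mem_initialIdeal]
  simp [support_monomial]

lemma support_mon_one (ν : Fin n →₀ ℕ) : (monomial ν (1 : k)).support = {ν} := by
  classical rw [support_monomial, if_neg one_ne_zero]

lemma degOf_eq (a : Fin n →₀ ℕ) : degOf a = Finsupp.degree a := rfl

lemma degOf_eq_sum (a : Fin n →₀ ℕ) : degOf a = ∑ j, a j := by
  rw [degOf]; exact Finsupp.sum_fintype _ _ fun _ => rfl

lemma apply_le_degOf (a : Fin n →₀ ℕ) (l : Fin n) : a l ≤ degOf a := by
  rw [degOf_eq_sum]
  exact Finset.single_le_sum (fun i _ => Nat.zero_le _) (Finset.mem_univ l)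

lemma degOf_lt_of_lt {a b : Fin n →₀ ℕ} (h : a ≤ b) (hne : a ≠ b) : degOf a < degOf b := by
  rw [degOf_eq_sum, degOf_eq_sum]
  have hj : ∃ j, a j ≠ b j := by
    by_contra hc; push_neg at hc; exact hne (Finsupp.ext hc)
  obtain ⟨j, hj⟩ := hj
  exact Finset.sum_lt_sum (fun i _ => Finsupp.le_def.mp h i)
    ⟨j, Finset.mem_univ j, lt_of_le_of_ne (Finsupp.le_def.mp h j) hj⟩

lemma degOf_add (a b : Fin n →₀ ℕ) : degOf (a + b) = degOf a + degOf b := by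
  simp only [degOf_eq_sum, Finsupp.add_apply, Finset.sum_add_distrib]

lemma degOf_single (j : Fin n) (t : ℕ) : degOf (Finsupp.single j t) = t := by
  rw [degOf]; exact Finsupp.sum_single_index rfl

lemma exists_minGens_aux (I : Ideal (MvPolynomial (Fin n) k)) (N : ℕ) :
    ∀ μ : Fin n →₀ ℕ, degOf μ ≤ N → monomial μ (1 : k) ∈ initialIdeal I →
      ∃ m ∈ minGens (initialIdeal I), m ≤ μ := by
  induction N with
  | zero =>
    intro μ hd hm
    refine ⟨μ, ⟨hm, ?_⟩, le_refl μ⟩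
    intro ν hν hle
    by_contra hne
    exact absurd (lt_of_lt_of_le (degOf_lt_of_lt hle hne) hd) (Nat.not_lt_zero _)
  | succ N ih =>
    intro μ hd hm
    by_cases hmin : ∀ ν : Fin n →₀ ℕ, monomial ν (1 : k) ∈ initialIdeal I → ν ≤ μ → ν = μ
    · exact ⟨μ, ⟨hm, hmin⟩, le_refl μ⟩
    · push_neg at hmin
      obtain ⟨ν, hνm, hνle, hνne⟩ := hmin
      have hlt : degOf ν < degOf μ := degOf_lt_of_lt hνle hνne
      obtain ⟨m, hmE, hmle⟩ := ih ν (by omega) hνm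
      exact ⟨m, hmE, le_trans hmle hνle⟩

lemma exists_minGens_le {I : Ideal (MvPolynomial (Fin n) k)} {μ : Fin n →₀ ℕ}
    (h : monomial μ (1 : k) ∈ initialIdeal I) :
    ∃ m ∈ minGens (initialIdeal I), m ≤ μ :=
  exists_minGens_aux I (degOf μ) μ le_rfl h

lemma minGens_finite (I : Ideal (MvPolynomial (Fin n) k)) :
    (minGens (initialIdeal I)).Finite := by
  refine IsAntichain.finite_of_partiallyWellOrderedOn ?_ (Set.isPWO_of_wellQuasiOrderedLE _)
  intro a ha b hb hne hle
  exact hne (hb.2 a ha.1 hle)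

/-- The generators of the initial ideal that involve none of the last `i` variables. -/
def G0 (i : ℕ) (I : Ideal (MvPolynomial (Fin n) k)) : Set (Fin n →₀ ℕ) :=
  {μ ∈ Gset I | ∀ j : Fin n, n - i ≤ (j : ℕ) → μ j = 0}

lemma evalZero_monomial (i : ℕ) (μ : Fin n →₀ ℕ)
    (h : ∀ j : Fin n, n - i ≤ (j : ℕ) → μ j = 0) :
    evalZero k n i (monomial μ (1 : k)) = monomial μ 1 := by
  rw [evalZero, aeval_monomial, map_one, one_mul, monomial_eq, C_1, one_mul]
  apply Finsupp.prod_congr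
  intro j hj
  have hji : (j : ℕ) < n - i := by
    by_contra hc
    exact Finsupp.mem_support_iff.mp hj (h j (by omega))
  rw [if_pos hji]

lemma evalZero_monomial_ne (i : ℕ) (μ : Fin n →₀ ℕ)
    (h : ¬ ∀ j : Fin n, n - i ≤ (j : ℕ) → μ j = 0) :
    evalZero k n i (monomial μ (1 : k)) = 0 := by
  push_neg at h
  obtain ⟨j, hji, hj0⟩ := h
  rw [evalZero, aeval_monomial, map_one, one_mul, Finsupp.prod]
  apply Finset.prod_eq_zero (Finsupp.mem_support_iff.mpr hj0)
  rw [if_neg (by omega), zero_pow hj0]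

lemma evalOne_monomial (i : ℕ) (hi : i < n) (μ : Fin n →₀ ℕ)
    (h : ∀ j : Fin n, n - i ≤ (j : ℕ) → μ j = 0) :
    evalOne k n i (monomial μ (1 : k)) =
      monomial (Finsupp.erase (⟨n - i - 1, Nat.lt_of_lt_of_le (Nat.sub_lt (Nat.sub_pos_of_lt hi) Nat.one_pos) (Nat.sub_le n i)⟩ : Fin n) μ) 1 := by
  have hsFv : ((⟨n - i - 1, Nat.lt_of_lt_of_le (Nat.sub_lt (Nat.sub_pos_of_lt hi) Nat.one_pos) (Nat.sub_le n i)⟩ : Fin n) : ℕ) = n - i - 1 := rfl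
  set sF : Fin n := ⟨n - i - 1, Nat.lt_of_lt_of_le (Nat.sub_lt (Nat.sub_pos_of_lt hi) Nat.one_pos) (Nat.sub_le n i)⟩
  have hsplit : monomial μ (1 : k) =
      monomial (Finsupp.single sF (μ sF)) 1 * monomial (Finsupp.erase sF μ) 1 := by
    rw [monomial_mul, one_mul, Finsupp.single_add_erase]
  rw [hsplit, map_mul]
  have h1 : evalOne k n i (monomial (Finsupp.erase sF μ) (1 : k)) =
      monomial (Finsupp.erase sF μ) 1 := by
    rw [evalOne, aeval_monomial, map_one, one_mul, monomial_eq, C_1, one_mul]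
    apply Finsupp.prod_congr
    intro j hj
    rw [Finsupp.support_erase, Finset.mem_erase] at hj
    have hj0 : μ j ≠ 0 := Finsupp.mem_support_iff.mp hj.2
    have hji : (j : ℕ) < n - i := by
      by_contra hc
      exact hj0 (h j (by omega))
    have hjv : (j : ℕ) ≠ n - i - 1 := fun hc => hj.1 (Fin.ext (by rw [hc, hsFv]))
    rw [if_pos (by omega)]
  have h2 : evalOne k n i (monomial (Finsupp.single sF (μ sF)) (1 : k)) = 1 := by
    rw [evalOne, aeval_monomial, map_one, one_mul]
    rw [Finsupp.prod_single_index]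
    · rw [if_neg (by rw [hsFv]; omega), if_pos hsFv, one_pow]
    · exact pow_zero _
  rw [h1, h2, one_mul]

lemma evalOne_monomial_ne (i : ℕ) (hi : i < n) (μ : Fin n →₀ ℕ)
    (h : ¬ ∀ j : Fin n, n - i ≤ (j : ℕ) → μ j = 0) :
    evalOne k n i (monomial μ (1 : k)) = 0 := by
  push_neg at h
  obtain ⟨j, hji, hj0⟩ := h
  rw [evalOne, aeval_monomial, map_one, one_mul, Finsupp.prod]
  apply Finset.prod_eq_zero (Finsupp.mem_support_iff.mpr hj0)
  rw [if_neg (by omega), if_neg (by omega), zero_pow hj0]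

lemma Jlow_eq (i : ℕ) (I : Ideal (MvPolynomial (Fin n) k)) :
    Jlow i I = Ideal.span ((fun s => monomial s (1 : k)) '' G0 i I) := by
  rw [Jlow, initialIdeal_eq, Ideal.map_span]
  apply le_antisymm
  · rw [Ideal.span_le]
    rintro _ ⟨_, ⟨μ, hμ, rfl⟩, rfl⟩
    by_cases h : ∀ j : Fin n, n - i ≤ (j : ℕ) → μ j = 0
    · rw [evalZero_monomial i μ h]
      exact Ideal.subset_span ⟨μ, ⟨hμ, h⟩, rfl⟩
    · rw [evalZero_monomial_ne i μ h]
      exact Ideal.zero_mem _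
  · rw [Ideal.span_le]
    rintro _ ⟨μ, ⟨hμ, h⟩, rfl⟩
    exact Ideal.subset_span ⟨monomial μ 1, ⟨μ, hμ, rfl⟩, evalZero_monomial i μ h⟩

lemma Jtil_eq (i : ℕ) (hi : i < n) (I : Ideal (MvPolynomial (Fin n) k)) :
    Jtil i I = Ideal.span ((fun s => monomial s (1 : k)) ''
      (Finsupp.erase (⟨n - i - 1, Nat.lt_of_lt_of_le (Nat.sub_lt (Nat.sub_pos_of_lt hi) Nat.one_pos) (Nat.sub_le n i)⟩ : Fin n) '' G0 i I)) := by
  rw [Jtil, initialIdeal_eq, Ideal.map_span]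
  apply le_antisymm
  · rw [Ideal.span_le]
    rintro _ ⟨_, ⟨μ, hμ, rfl⟩, rfl⟩
    by_cases h : ∀ j : Fin n, n - i ≤ (j : ℕ) → μ j = 0
    · rw [evalOne_monomial i hi μ h]
      exact Ideal.subset_span ⟨_, ⟨μ, ⟨hμ, h⟩, rfl⟩, rfl⟩
    · rw [evalOne_monomial_ne i hi μ h]
      exact Ideal.zero_mem _
  · rw [Ideal.span_le]
    rintro _ ⟨_, ⟨μ, ⟨hμ, h⟩, rfl⟩, rfl⟩
    exact Ideal.subset_span ⟨monomial μ 1, ⟨μ, hμ, rfl⟩, evalOne_monomial i hi μ h⟩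

lemma erase_mono {a b : Fin n →₀ ℕ} (j : Fin n) (h : a ≤ b) :
    Finsupp.erase j a ≤ Finsupp.erase j b := by
  rw [Finsupp.le_def]
  intro l
  by_cases hl : l = j
  · subst hl; simp [Finsupp.erase_same]
  · rw [Finsupp.erase_ne hl, Finsupp.erase_ne hl]; exact Finsupp.le_def.mp h l

lemma erase_le (j : Fin n) (a : Fin n →₀ ℕ) : Finsupp.erase j a ≤ a := by
  rw [Finsupp.le_def]
  intro l
  by_cases hl : l = j
  · subst hl; rw [Finsupp.erase_same]; exact Nat.zero_le _
  · rw [Finsupp.erase_ne hl]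

lemma Evar_succ_subset (i : ℕ) (I : Ideal (MvPolynomial (Fin n) k)) :
    Evar (i + 1) I ⊆ Evar i I := by
  rintro m ⟨hm, h0⟩
  exact ⟨hm, fun j hj => h0 j (by omega)⟩

lemma mon_mem_Jlow {i : ℕ} {I : Ideal (MvPolynomial (Fin n) k)} {ν : Fin n →₀ ℕ} :
    monomial ν (1 : k) ∈ Jlow i I ↔ ∃ m ∈ Evar i I, m ≤ ν := by
  rw [Jlow_eq, mem_ideal_span_monomial_image]
  simp only [support_mon_one, Finset.mem_singleton, forall_eq]
  constructor
  · rintro ⟨γ, ⟨hγG, hγ0⟩, hle⟩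
    obtain ⟨m, hm, hmle⟩ := exists_minGens_le (μ := γ)
      (mon_mem_initialIdeal.mpr ⟨γ, hγG, le_refl γ⟩)
    refine ⟨m, ⟨hm, fun j hj => ?_⟩, le_trans hmle hle⟩
    exact Nat.le_zero.mp (le_trans (Finsupp.le_def.mp hmle j) (le_of_eq (hγ0 j hj)))
  · rintro ⟨m, ⟨hmE, hm0⟩, hle⟩
    obtain ⟨γ, hγG, hγle⟩ := mon_mem_initialIdeal.mp hmE.1
    refine ⟨γ, ⟨hγG, fun j hj => ?_⟩, le_trans hγle hle⟩
    exact Nat.le_zero.mp (le_trans (Finsupp.le_def.mp hγle j) (le_of_eq (hm0 j hj)))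

lemma mon_mem_Jtil {i : ℕ} (hi : i < n) {I : Ideal (MvPolynomial (Fin n) k)} {ν : Fin n →₀ ℕ} :
    monomial ν (1 : k) ∈ Jtil i I ↔
      ∃ v ∈ Evar i I, Finsupp.erase (⟨n - i - 1, Nat.lt_of_lt_of_le (Nat.sub_lt (Nat.sub_pos_of_lt hi) Nat.one_pos) (Nat.sub_le n i)⟩ : Fin n) v ≤ ν := by
  rw [Jtil_eq i hi, mem_ideal_span_monomial_image]
  simp only [support_mon_one, Finset.mem_singleton, forall_eq]
  constructor
  · rintro ⟨_, ⟨μ, ⟨hμG, hμ0⟩, rfl⟩, hle⟩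
    obtain ⟨m, hm, hmle⟩ := exists_minGens_le (μ := μ)
      (mon_mem_initialIdeal.mpr ⟨μ, hμG, le_refl μ⟩)
    refine ⟨m, ⟨hm, fun j hj => ?_⟩, le_trans (erase_mono _ hmle) hle⟩
    exact Nat.le_zero.mp (le_trans (Finsupp.le_def.mp hmle j) (le_of_eq (hμ0 j hj)))
  · rintro ⟨v, ⟨hvE, hv0⟩, hle⟩
    obtain ⟨γ, hγG, hγle⟩ := mon_mem_initialIdeal.mp hvE.1
    have hγ0 : ∀ j : Fin n, n - i ≤ (j : ℕ) → γ j = 0 := fun j hj =>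
      Nat.le_zero.mp (le_trans (Finsupp.le_def.mp hγle j) (le_of_eq (hv0 j hj)))
    exact ⟨_, ⟨γ, ⟨hγG, hγ0⟩, rfl⟩, le_trans (erase_mono _ hγle) hle⟩

/-- The monomial-level condition describing degrees where `J̃ᵢ/Jᵢ` is nonzero. -/
def Pmon (i : ℕ) (I : Ideal (MvPolynomial (Fin n) k)) (hi : i < n) (ν : Fin n →₀ ℕ) : Prop :=
  (∀ j : Fin n, n - i ≤ (j : ℕ) → ν j = 0) ∧
    (∃ v ∈ Evar i I, Finsupp.erase (⟨n - i - 1, Nat.lt_of_lt_of_le (Nat.sub_lt (Nat.sub_pos_of_lt hi) Nat.one_pos) (Nat.sub_le n i)⟩ : Fin n) v ≤ ν) ∧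
    ¬ ∃ m ∈ Evar i I, m ≤ ν

lemma Pc_iff {i : ℕ} (hi : i < n) {I : Ideal (MvPolynomial (Fin n) k)} (r : ℕ) :
    (∃ f : MvPolynomial (Fin n) k, f ∈ Jtil i I ∧
        f ∈ supported k {j : Fin n | (j : ℕ) < n - i} ∧ f.IsHomogeneous r ∧ f ∉ Jlow i I) ↔
      ∃ ν : Fin n →₀ ℕ, Pmon i I hi ν ∧ degOf ν = r := by
  constructor
  · rintro ⟨f, hfT, hfS, hfH, hfL⟩
    rw [Jlow_eq, mem_ideal_span_monomial_image] at hfL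
    push_neg at hfL
    obtain ⟨ν, hνsupp, hνL⟩ := hfL
    have hν0 : ∀ j : Fin n, n - i ≤ (j : ℕ) → ν j = 0 := by
      intro j hj
      by_contra hc
      have hjv : j ∈ f.vars := (mem_vars j).mpr ⟨ν, hνsupp, Finsupp.mem_support_iff.mpr hc⟩
      have := (mem_supported.mp hfS) hjv
      simp only [Set.mem_setOf_eq] at this
      omega
    have hνT : monomial ν (1 : k) ∈ Jtil i I := by
      rw [Jtil_eq i hi, mem_ideal_span_monomial_image]
      simp only [support_mon_one, Finset.mem_singleton, forall_eq]
      rw [Jtil_eq i hi, mem_ideal_span_monomial_image] at hfT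
      exact hfT ν hνsupp
    have hνL' : monomial ν (1 : k) ∉ Jlow i I := by
      rw [Jlow_eq, mem_ideal_span_monomial_image]
      simp only [support_mon_one, Finset.mem_singleton, forall_eq]
      push_neg
      exact hνL
    refine ⟨ν, ⟨hν0, (mon_mem_Jtil hi).mp hνT, fun hc => hνL' (mon_mem_Jlow.mpr hc)⟩, ?_⟩
    have := hfH (mem_support_iff.mp hνsupp)
    rw [degOf_eq, Finsupp.degree_eq_weight_one]
    exact this
  · rintro ⟨ν, ⟨hν0, hνT, hνL⟩, rfl⟩
    refine ⟨monomial ν 1, (mon_mem_Jtil hi).mpr hνT, ?_, ?_, ?_⟩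
    · rw [mem_supported, vars_monomial (one_ne_zero : (1 : k) ≠ 0)]
      intro j hj
      simp only [Finset.mem_coe, Finsupp.mem_support_iff] at hj
      simp only [Set.mem_setOf_eq]
      by_contra hc
      exact hj (hν0 j (by omega))
    · exact isHomogeneous_monomial _ (degOf_eq ν).symm
    · intro hc
      exact hνL (mon_mem_Jlow.mp hc)

end Stmt9Aux

/-- Lemma 4.1: `c_i(I) < ∞` iff for every
`a ∈ p_{n-i}(E_i) \ E_{i+1}` there are `b_j ∈ E_{i+1}` with `p_j(a) ≥ p_j(b_j)`
for each `j = 1, …, n-i-1`. -/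
theorem stmt_9 {k : Type*} [Field k] {n : ℕ} (I : Ideal (MvPolynomial (Fin n) k))
    (hI : HomogIdeal I) (i : ℕ) (hi : i < n) :
    cInv i I < ⊤ ↔
      ∀ a : Fin n →₀ ℕ,
        (∃ v ∈ Evar i I, a = Finsupp.erase (⟨n - i - 1, by omega⟩ : Fin n) v) →
        a ∉ Evar (i + 1) I →
        ∀ j : Fin n, (j : ℕ) < n - i - 1 →
          ∃ b ∈ Evar (i + 1) I, ∀ l : Fin n, l ≠ j → b l ≤ a l := by
  have hchar : cInv i I < ⊤ ↔ ∃ N : ℕ, ∀ r : ℕ,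
      (∃ f : MvPolynomial (Fin n) k, f ∈ Jtil i I ∧
        f ∈ supported k {j : Fin n | (j : ℕ) < n - i} ∧ f.IsHomogeneous r ∧ f ∉ Jlow i I) →
        r ≤ N :=
    sSup_natW_lt_top_iff _
  rw [hchar]
  have hsFv : ((⟨n - i - 1, by omega⟩ : Fin n) : ℕ) = n - i - 1 := rfl
  set sF : Fin n := ⟨n - i - 1, by omega⟩ with hsF
  constructor
  · rintro ⟨N, hN⟩ a ⟨v, hvE, rfl⟩ haE j hj
    by_contra hb
    push_neg at hb
    set νt : Fin n →₀ ℕ := Finsupp.erase sF v + Finsupp.single j (N + 1) with hνt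
    have hvan : ∀ j' : Fin n, n - i ≤ (j' : ℕ) → (Finsupp.erase sF v) j' = 0 := by
      intro j' hj'
      have hne : j' ≠ sF := by
        intro hc
        rw [hc, hsFv] at hj'
        omega
      rw [Finsupp.erase_ne hne]
      exact hvE.2 j' hj'
    have hP : Pmon i I hi νt := by
      refine ⟨?_, ⟨v, hvE, ?_⟩, ?_⟩
      · intro j' hj'
        rw [hνt, Finsupp.add_apply, hvan j' hj', Finsupp.single_apply, if_neg, add_zero]
        intro hc
        rw [hc] at hj
        omega
      · rw [hνt]
        exact Finsupp.le_def.mpr fun l => by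
          rw [Finsupp.add_apply]; exact Nat.le_add_right _ _
      · rintro ⟨m, hmE, hmle⟩
        have hjs : j ≠ sF := by
          intro hc
          rw [hc, hsFv] at hj
          omega
        have hms : m sF = 0 := by
          have hle := Finsupp.le_def.mp hmle sF
          rw [hνt, Finsupp.add_apply, Finsupp.erase_same, Finsupp.single_apply,
            if_neg hjs] at hle
          omega
        have hmE' : m ∈ Evar (i + 1) I := by
          refine ⟨hmE.1, fun j' hj' => ?_⟩
          by_cases hge : n - i ≤ (j' : ℕ)
          · exact hmE.2 j' hge
          · have hj's : j' = sF := Fin.ext (by rw [hsFv]; omega)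
            rw [hj's]; exact hms
        obtain ⟨l, hlj, hlt⟩ := hb m hmE'
        have hle := Finsupp.le_def.mp hmle l
        rw [hνt, Finsupp.add_apply, Finsupp.single_apply, if_neg (fun hc => hlj hc.symm)] at hle
        omega
    have hNν := hN (degOf νt) ((Pc_iff hi _).mpr ⟨νt, hP, rfl⟩)
    rw [hνt, degOf_add, degOf_single] at hNν
    omega
  · intro hRHS
    obtain ⟨D, hD⟩ : ∃ D : ℕ, ∀ m ∈ minGens (initialIdeal I), degOf m < D := by
      refine ⟨((minGens_finite I).toFinset.sup degOf) + 1, fun m hm => ?_⟩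
      have := Finset.le_sup (f := degOf) ((minGens_finite I).mem_toFinset.mpr hm)
      omega
    refine ⟨n * D, fun r hr => ?_⟩
    obtain ⟨ν, ⟨hν0, ⟨v, hvE, hvle⟩, hnm⟩, rfl⟩ := (Pc_iff hi r).mp hr
    have hDv : ∀ {m : Fin n →₀ ℕ}, m ∈ minGens (initialIdeal I) → ∀ l, m l < D :=
      fun hm l => lt_of_le_of_lt (apply_le_degOf _ l) (hD _ hm)
    have hbound : ∀ l : Fin n, ν l ≤ D := by
      intro l
      by_cases hge : n - i ≤ (l : ℕ)
      · rw [hν0 l hge]; exact Nat.zero_le _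
      by_cases hsl : (l : ℕ) = n - i - 1
      · have hlsF : l = sF := Fin.ext (by rw [hsl, hsFv])
        by_contra hc
        push_neg at hc
        have hvν : v ≤ ν := by
          refine Finsupp.le_def.mpr fun l' => ?_
          by_cases hl' : l' = l
          · subst hl'
            have h1 : v l' ≤ degOf v := apply_le_degOf v l'
            have h2 : degOf v < D := hD v hvE.1
            omega
          · have hne : l' ≠ sF := fun hcc => hl' (hcc.trans hlsF.symm)
            calc v l' = (Finsupp.erase sF v) l' := (Finsupp.erase_ne hne).symm
              _ ≤ ν l' := Finsupp.le_def.mp hvle l'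
        exact hnm ⟨v, hvE, hvν⟩
      · have haE : Finsupp.erase sF v ∉ Evar (i + 1) I := by
          intro hcE
          exact hnm ⟨_, Evar_succ_subset i I hcE, hvle⟩
        obtain ⟨b, hbE, hble⟩ := hRHS (Finsupp.erase sF v) ⟨v, hvE, rfl⟩ haE l (by omega)
        by_contra hc
        push_neg at hc
        have hbν : b ≤ ν := by
          refine Finsupp.le_def.mpr fun l' => ?_
          by_cases hl' : l' = l
          · subst hl'
            have := hDv hbE.1 l'
            omega
          · exact le_trans (hble l' hl') (Finsupp.le_def.mp hvle l')
        exact hnm ⟨b, Evar_succ_subset i I hbE, hbν⟩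
    calc degOf ν = ∑ l, ν l := degOf_eq_sum ν
      _ ≤ ∑ _l : Fin n, D := Finset.sum_le_sum fun l _ => hbound l
      _ = n * D := by simp [Finset.sum_const, Finset.card_univ, mul_comm]
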